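/- Fix 0 < α < 1. The function ϑ(t) = ((1−t^α)/(1−t))² for t ≠ 1, ϑ(1) = α², is strictly monotonically decreasing on (0,∞). -/

import Mathlib

open Real Classical

/-- Strict weighted AM-GM consequence: (1-α)x^α + α x^(α-1) > 1 for x ≠ 1. -/
lemma stmt6_key (α : ℝ) (hα0 : 0 < α) (hα1 : α < 1) {x : ℝ} (hx : 0 < x) (hx1 : x ≠ 1) :
    1 < (1 - α) * x ^ α + α * x ^ (α - 1) := by
  have hlog : Real.log x ≠ 0 := Real.log_ne_zero_of_pos_of_ne_one hx hx1
  have hne : Real.log x * α ≠ Real.log x * (α - 1) := by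
    intro h
    have := mul_left_cancel₀ hlog h
    linarith
  have h := strictConvexOn_exp.2 (Set.mem_univ (Real.log x * α))
      (Set.mem_univ (Real.log x * (α - 1))) hne (by linarith : (0:ℝ) < 1 - α) hα0 (by ring)
  simp only [smul_eq_mul] at h
  have harg : (1 - α) * (Real.log x * α) + α * (Real.log x * (α - 1)) = 0 := by ring
  rw [harg, Real.exp_zero] at h
  rwa [Real.rpow_def_of_pos hx, Real.rpow_def_of_pos hx]

lemma stmt6_gpos (α : ℝ) (hα0 : 0 < α) (hα1 : α < 1) {x : ℝ} (hx : 0 < x) (hx1 : x ≠ 1) :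
    0 < (1 - x ^ α) / (1 - x) := by
  rcases lt_or_gt_of_ne hx1 with h | h
  · apply div_pos
    · have : x ^ α < 1 := Real.rpow_lt_one hx.le h hα0
      linarith
    · linarith
  · apply div_pos_of_neg_of_neg
    · have : 1 < x ^ α := Real.one_lt_rpow_iff_of_pos hx |>.mpr (Or.inl ⟨h, hα0⟩)
      linarith
    · linarith

/-- Derivative at points ≠ 1. -/
lemma stmt6_deriv (α : ℝ) (hα0 : 0 < α) (hα1 : α < 1) {x : ℝ} (hx : 0 < x) (hx1 : x ≠ 1) :
    ∃ d : ℝ, d < 0 ∧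
      HasDerivAt (fun t : ℝ => if t = 1 then α ^ 2 else ((1 - t ^ α) / (1 - t)) ^ 2) d x := by
  have hden : (1 : ℝ) - x ≠ 0 := sub_ne_zero.mpr (Ne.symm hx1)
  have hu : HasDerivAt (fun t : ℝ => 1 - t ^ α) (-(α * x ^ (α - 1))) x :=
    (Real.hasDerivAt_rpow_const (Or.inl hx.ne')).const_sub 1
  have hv : HasDerivAt (fun t : ℝ => 1 - t) (-1) x := (hasDerivAt_id x).const_sub 1
  have hg : HasDerivAt (fun t : ℝ => (1 - t ^ α) / (1 - t))
      ((-(α * x ^ (α - 1)) * (1 - x) - (1 - x ^ α) * (-1)) / (1 - x) ^ 2) x := hu.div hv hden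
  have hG := hg.pow 2
  refine ⟨_, ?_, hG.congr_of_eventuallyEq ?_⟩
  · -- sign of derivative
    have hgp := stmt6_gpos α hα0 hα1 hx hx1
    have hkey := stmt6_key α hα0 hα1 hx hx1
    have hxx : x ^ (α - 1) * x = x ^ α := by
      have he : (α - 1) + 1 = α := by ring
      conv_rhs => rw [← he, Real.rpow_add_one hx.ne']
    have hnum : (-(α * x ^ (α - 1)) * (1 - x) - (1 - x ^ α) * (-1)) < 0 := by nlinarith
    have : (-(α * x ^ (α - 1)) * (1 - x) - (1 - x ^ α) * (-1)) / (1 - x) ^ 2 < 0 :=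
      div_neg_of_neg_of_pos hnum (by positivity)
    have h2 : (0:ℝ) < (2:ℕ) * ((1 - x ^ α) / (1 - x)) ^ (2 - 1) := by
      norm_num
      positivity
    exact mul_neg_of_pos_of_neg h2 this
  · -- eventual equality near x ≠ 1
    filter_upwards [eventually_ne_nhds hx1] with t ht
    simp [ht]

lemma stmt6_cont1 (α : ℝ) (hα0 : 0 < α) (hα1 : α < 1) :
    ContinuousAt (fun t : ℝ => if t = 1 then α ^ 2 else ((1 - t ^ α) / (1 - t)) ^ 2) 1 := by
  rw [← continuousWithinAt_compl_self]
  have hd : HasDerivAt (fun t : ℝ => t ^ α) (α * (1:ℝ) ^ (α - 1)) 1 :=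
    Real.hasDerivAt_rpow_const (Or.inl one_ne_zero)
  have hs := hasDerivAt_iff_tendsto_slope.mp hd
  have hs2 : Filter.Tendsto (fun t => (slope (fun t : ℝ => t ^ α) 1 t) ^ 2)
      (nhdsWithin 1 {(1:ℝ)}ᶜ) (nhds ((α * (1:ℝ) ^ (α - 1)) ^ 2)) := hs.pow 2
  have heq : ∀ t : ℝ, t ≠ 1 →
      (if t = 1 then α ^ 2 else ((1 - t ^ α) / (1 - t)) ^ 2) = (slope (fun t : ℝ => t ^ α) 1 t) ^ 2 := by
    intro t ht
    rw [if_neg ht, slope_def_field]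
    have : (1 - t ^ α) / (1 - t) = (t ^ α - (1:ℝ) ^ α) / (t - 1) := by
      rw [Real.one_rpow]
      rw [div_eq_div_iff (sub_ne_zero.mpr (Ne.symm ht)) (sub_ne_zero.mpr ht)]
      ring
    rw [this]
  have hval : (α * (1:ℝ) ^ (α - 1)) ^ 2 = α ^ 2 := by rw [Real.one_rpow]; ring
  have hgoal : Filter.Tendsto (fun t : ℝ => if t = 1 then α ^ 2 else ((1 - t ^ α) / (1 - t)) ^ 2)
      (nhdsWithin 1 {(1:ℝ)}ᶜ) (nhds (α ^ 2)) := by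
    rw [hval] at hs2
    refine hs2.congr' ?_
    filter_upwards [self_mem_nhdsWithin] with t ht
    exact (heq t ht).symm
  simpa [ContinuousWithinAt] using hgoal

theorem stmt6
    (α : ℝ) (hα0 : 0 < α) (hα1 : α < 1) :
    StrictAntiOn (fun t : ℝ => if t = 1 then α ^ 2 else ((1 - t ^ α) / (1 - t)) ^ 2)
      (Set.Ioi (0 : ℝ)) := by
  set f : ℝ → ℝ := fun t => if t = 1 then α ^ 2 else ((1 - t ^ α) / (1 - t)) ^ 2 with hf
  have hcont : ∀ x : ℝ, 0 < x → ContinuousAt f x := by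
    intro x hx
    by_cases hx1 : x = 1
    · subst hx1; exact stmt6_cont1 α hα0 hα1
    · obtain ⟨d, _, hd⟩ := stmt6_deriv α hα0 hα1 hx hx1
      exact hd.continuousAt
  have hderiv : ∀ x : ℝ, 0 < x → x ≠ 1 → deriv f x < 0 := by
    intro x hx hx1
    obtain ⟨d, hdneg, hd⟩ := stmt6_deriv α hα0 hα1 hx hx1
    rwa [hd.deriv]
  have h1 : StrictAntiOn f (Set.Ioc 0 1) := by
    apply strictAntiOn_of_deriv_neg (convex_Ioc 0 1)
    · exact fun x hx => (hcont x hx.1).continuousWithinAt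
    · intro x hx
      rw [interior_Ioc] at hx
      exact hderiv x hx.1 (ne_of_lt hx.2)
  have h2 : StrictAntiOn f (Set.Ici 1) := by
    apply strictAntiOn_of_deriv_neg (convex_Ici 1)
    · exact fun x hx => (hcont x (lt_of_lt_of_le one_pos hx)).continuousWithinAt
    · intro x hx
      rw [interior_Ici] at hx
      exact hderiv x (lt_trans one_pos hx) (ne_of_gt hx)
  intro x hx y hy hxy
  simp only [Set.mem_Ioi] at hx hy
  rcases le_or_gt y 1 with hy1 | hy1
  · exact h1 ⟨hx, (hxy.trans_le hy1).le⟩ ⟨hy, hy1⟩ hxy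
  · rcases lt_or_ge x 1 with hx1 | hx1
    · calc f y < f 1 := h2 (le_refl (1:ℝ) : (1:ℝ) ∈ Set.Ici 1) hy1.le hy1
        _ ≤ f x := (h1 ⟨hx, hx1.le⟩ ⟨one_pos, le_rfl⟩ hx1).le
    · exact h2 hx1 hy1.le hxy
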